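/- Let λ ∈ ℤ^D \ {0} and let (φ, ψ) be a λ-mode wave solution on (0,∞). Then: (i) there is C > 0 depending only on D and p_1,…,p_D such that for every t ≥ t_{λ*}, |t·(d/dt)E_{λ,high}(t)| ≤ C·(t|ζ_λ′(t)| + τ_λ(t)^{−2})·E_{λ,high}(t); (ii) there is C_high > 0 depending only on D and p_1,…,p_D such that for every t with t_{λ*} ≤ t ≤ 1: C_high^{−1}·E_{λ,high}(t) ≤ E_{λ,high}(1) ≤ C_high·E_{λ,high}(t). -/

import Mathlib

open Real Filter MeasureTheory Topology

/-- τ_λ(t) = (∑ᵢ t^(2-2pᵢ) λᵢ²)^(1/2). -/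
noncomputable def tau {D : ℕ} (p : Fin D → ℝ) (lam : Fin D → ℤ) (t : ℝ) : ℝ :=
  Real.sqrt (∑ i, t ^ (2 - 2 * p i) * ((lam i : ℝ)) ^ 2)

/-- ζ_λ(t) = 2τ_λ(t)² / ∑ᵢ (2-2pᵢ) t^(2-2pᵢ) λᵢ². -/
noncomputable def zeta {D : ℕ} (p : Fin D → ℝ) (lam : Fin D → ℤ) (t : ℝ) : ℝ :=
  2 * tau p lam t ^ 2 / ∑ i, (2 - 2 * p i) * t ^ (2 - 2 * p i) * ((lam i : ℝ)) ^ 2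

/-- A λ-mode wave solution on the set `I`: t φ' = ψ and t ψ' = -τ_λ(t)² φ. -/
def IsWaveSol {D : ℕ} (p : Fin D → ℝ) (lam : Fin D → ℤ) (φ ψ : ℝ → ℝ) (I : Set ℝ) : Prop :=
  ∀ t ∈ I, HasDerivAt φ (ψ t / t) t ∧ HasDerivAt ψ (-(tau p lam t ^ 2) * φ t / t) t

/-- The high-frequency wave energy E_{λ,high}. -/
noncomputable def Ehigh {D : ℕ} (p : Fin D → ℝ) (lam : Fin D → ℤ) (φ ψ : ℝ → ℝ) (t : ℝ) : ℝ :=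
  zeta p lam t ^ 2 * ψ t ^ 2 / tau p lam t + zeta p lam t * ψ t * φ t / tau p lam t
    + φ t ^ 2 / (2 * tau p lam t) + zeta p lam t ^ 2 * tau p lam t * φ t ^ 2

namespace WHF
variable {D : ℕ} (p : Fin D → ℝ) (lam : Fin D → ℤ)

noncomputable def T (t : ℝ) : ℝ := ∑ i, t ^ (2 - 2 * p i) * ((lam i : ℝ)) ^ 2
noncomputable def U (t : ℝ) : ℝ := ∑ i, (2 - 2 * p i) * t ^ (2 - 2 * p i) * ((lam i : ℝ)) ^ 2
noncomputable def V (t : ℝ) : ℝ := ∑ i, (2 - 2 * p i) ^ 2 * t ^ (2 - 2 * p i) * ((lam i : ℝ)) ^ 2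

variable {p lam}

lemma T_nonneg {t : ℝ} (ht : 0 < t) : 0 ≤ T p lam t :=
  Finset.sum_nonneg fun i _ => mul_nonneg (rpow_pos_of_pos ht _).le (sq_nonneg _)

lemma T_pos (hlam : lam ≠ 0) {t : ℝ} (ht : 0 < t) : 0 < T p lam t := by
  obtain ⟨i, hi⟩ := Function.ne_iff.1 hlam
  refine Finset.sum_pos' (fun j _ => mul_nonneg (rpow_pos_of_pos ht _).le (sq_nonneg _))
    ⟨i, Finset.mem_univ i, mul_pos (rpow_pos_of_pos ht _) ?_⟩
  have : (lam i : ℝ) ≠ 0 := Int.cast_ne_zero.2 hi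
  positivity

lemma U_pos (hp : ∀ i, p i < 1) (hlam : lam ≠ 0) {t : ℝ} (ht : 0 < t) : 0 < U p lam t := by
  obtain ⟨i, hi⟩ := Function.ne_iff.1 hlam
  have hc : ∀ j, 0 < 2 - 2 * p j := fun j => by have := hp j; linarith
  refine Finset.sum_pos' (fun j _ => mul_nonneg (mul_nonneg (hc j).le (rpow_pos_of_pos ht _).le)
    (sq_nonneg _)) ⟨i, Finset.mem_univ i, ?_⟩
  have : (lam i : ℝ) ≠ 0 := Int.cast_ne_zero.2 hi
  have := hc i
  have := rpow_pos_of_pos ht (2 - 2 * p i)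
  positivity

lemma tau_eq (t : ℝ) : tau p lam t = Real.sqrt (T p lam t) := rfl

lemma tau_pos (hlam : lam ≠ 0) {t : ℝ} (ht : 0 < t) : 0 < tau p lam t :=
  Real.sqrt_pos.2 (T_pos hlam ht)

lemma tau_sq {t : ℝ} (ht : 0 < t) : tau p lam t ^ 2 = T p lam t :=
  Real.sq_sqrt (T_nonneg ht)

lemma zeta_eq {t : ℝ} (ht : 0 < t) : zeta p lam t = 2 * T p lam t / U p lam t := by
  rw [zeta, tau_sq ht]; rfl

lemma hasDerivAt_T {t : ℝ} (ht : 0 < t) : HasDerivAt (T p lam) (U p lam t / t) t := by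
  have h : ∀ i : Fin D, HasDerivAt (fun s : ℝ => s ^ (2 - 2 * p i) * ((lam i : ℝ)) ^ 2)
      ((2 - 2 * p i) * t ^ (2 - 2 * p i) * ((lam i : ℝ)) ^ 2 / t) t := by
    intro i
    have := (Real.hasDerivAt_rpow_const (x := t) (p := 2 - 2 * p i) (Or.inl ht.ne')).mul_const
      ((lam i : ℝ) ^ 2)
    refine this.congr_deriv ?_
    rw [Real.rpow_sub_one ht.ne']
    ring
  have h2 := HasDerivAt.fun_sum (u := Finset.univ) (fun i _ => h i)
  have : U p lam t / t = ∑ i, (2 - 2 * p i) * t ^ (2 - 2 * p i) * ((lam i : ℝ)) ^ 2 / t := by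
    rw [U, Finset.sum_div]
  rw [this]
  exact h2

lemma hasDerivAt_U {t : ℝ} (ht : 0 < t) : HasDerivAt (U p lam) (V p lam t / t) t := by
  have h : ∀ i : Fin D, HasDerivAt (fun s : ℝ => (2 - 2 * p i) * s ^ (2 - 2 * p i) * ((lam i : ℝ)) ^ 2)
      ((2 - 2 * p i) ^ 2 * t ^ (2 - 2 * p i) * ((lam i : ℝ)) ^ 2 / t) t := by
    intro i
    have h0 := Real.hasDerivAt_rpow_const (x := t) (p := 2 - 2 * p i) (Or.inl ht.ne')
    have := (h0.const_mul (2 - 2 * p i)).mul_const ((lam i : ℝ) ^ 2)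
    refine this.congr_deriv ?_
    rw [Real.rpow_sub_one ht.ne']
    ring
  have h2 := HasDerivAt.fun_sum (u := Finset.univ) (fun i _ => h i)
  have : V p lam t / t = ∑ i, (2 - 2 * p i) ^ 2 * t ^ (2 - 2 * p i) * ((lam i : ℝ)) ^ 2 / t := by
    rw [V, Finset.sum_div]
  rw [this]
  exact h2

lemma hasDerivAt_tau (hlam : lam ≠ 0) {t : ℝ} (ht : 0 < t) :
    HasDerivAt (tau p lam) (U p lam t / (2 * t * tau p lam t)) t := by
  have := (hasDerivAt_T (p := p) (lam := lam) ht).sqrt (T_pos hlam ht).ne'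
  refine HasDerivAt.congr_deriv (f := tau p lam) this ?_
  rw [tau_eq]
  field_simp

lemma hasDerivAt_zeta (hp : ∀ i, p i < 1) (hlam : lam ≠ 0) {t : ℝ} (ht : 0 < t) :
    HasDerivAt (zeta p lam)
      (2 * (U p lam t ^ 2 - T p lam t * V p lam t) / (t * U p lam t ^ 2)) t := by
  have hU := U_pos hp hlam ht
  have hg : HasDerivAt (fun s => 2 * T p lam s / U p lam s)
      (2 * (U p lam t ^ 2 - T p lam t * V p lam t) / (t * U p lam t ^ 2)) t := by
    have := ((hasDerivAt_T (p := p) (lam := lam) ht).const_mul 2).div (hasDerivAt_U ht) hU.ne'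
    refine HasDerivAt.congr_deriv this ?_
    field_simp
  refine hg.congr_of_eventuallyEq ?_
  filter_upwards [Ioi_mem_nhds ht] with s hs
  rw [zeta_eq hs]

lemma U_le (hc : ∀ i, 2 - 2 * p i ≤ cmax) {t : ℝ} (ht : 0 < t) :
    U p lam t ≤ cmax * T p lam t := by
  rw [U, T, Finset.mul_sum]
  refine Finset.sum_le_sum fun i _ => ?_
  have h1 : (0:ℝ) ≤ t ^ (2 - 2 * p i) * ((lam i : ℝ)) ^ 2 :=
    mul_nonneg (rpow_pos_of_pos ht _).le (sq_nonneg _)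
  calc (2 - 2 * p i) * t ^ (2 - 2 * p i) * ((lam i : ℝ)) ^ 2
      = (2 - 2 * p i) * (t ^ (2 - 2 * p i) * ((lam i : ℝ)) ^ 2) := by ring
    _ ≤ cmax * (t ^ (2 - 2 * p i) * ((lam i : ℝ)) ^ 2) := by
        exact mul_le_mul_of_nonneg_right (hc i) h1

lemma le_U (hc : ∀ i, cmin ≤ 2 - 2 * p i) {t : ℝ} (ht : 0 < t) :
    cmin * T p lam t ≤ U p lam t := by
  rw [U, T, Finset.mul_sum]
  refine Finset.sum_le_sum fun i _ => ?_
  have h1 : (0:ℝ) ≤ t ^ (2 - 2 * p i) * ((lam i : ℝ)) ^ 2 :=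
    mul_nonneg (rpow_pos_of_pos ht _).le (sq_nonneg _)
  calc cmin * (t ^ (2 - 2 * p i) * ((lam i : ℝ)) ^ 2)
      ≤ (2 - 2 * p i) * (t ^ (2 - 2 * p i) * ((lam i : ℝ)) ^ 2) :=
        mul_le_mul_of_nonneg_right (hc i) h1
    _ = (2 - 2 * p i) * t ^ (2 - 2 * p i) * ((lam i : ℝ)) ^ 2 := by ring

lemma zeta_le (hp : ∀ i, p i < 1) (hlam : lam ≠ 0) {cmin : ℝ} (hc0 : 0 < cmin)
    (hc : ∀ i, cmin ≤ 2 - 2 * p i) {t : ℝ} (ht : 0 < t) : zeta p lam t ≤ 2 / cmin := by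
  rw [zeta_eq ht, div_le_div_iff₀ (U_pos hp hlam ht) hc0]
  have := le_U (lam := lam) hc ht
  nlinarith [T_pos (p := p) hlam ht]

lemma zeta_ge (hp : ∀ i, p i < 1) (hlam : lam ≠ 0) {cmax : ℝ} (hc0 : 0 < cmax)
    (hc : ∀ i, 2 - 2 * p i ≤ cmax) {t : ℝ} (ht : 0 < t) : 2 / cmax ≤ zeta p lam t := by
  rw [zeta_eq ht, div_le_div_iff₀ hc0 (U_pos hp hlam ht)]
  have := U_le (lam := lam) hc ht
  nlinarith [T_pos (p := p) hlam ht]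

lemma cauchy (hp : ∀ i, p i < 1) {t : ℝ} (ht : 0 < t) :
    U p lam t ^ 2 ≤ T p lam t * V p lam t := by
  refine Finset.sum_sq_le_sum_mul_sum_of_sq_eq_mul Finset.univ
    (fun i _ => mul_nonneg (rpow_pos_of_pos ht _).le (sq_nonneg _))
    (fun i _ => mul_nonneg (mul_nonneg (sq_nonneg _) (rpow_pos_of_pos ht _).le) (sq_nonneg _))
    (fun i _ => by ring)

lemma T_lower (hc : ∀ i, cmin ≤ 2 - 2 * p i) {tstar t : ℝ} (h0 : 0 < tstar)
    (htt : tstar ≤ t) : T p lam tstar * (t / tstar) ^ cmin ≤ T p lam t := by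
  have ht : 0 < t := lt_of_lt_of_le h0 htt
  have hq : (1:ℝ) ≤ t / tstar := (one_le_div h0).2 htt
  rw [T, T, Finset.sum_mul]
  refine Finset.sum_le_sum fun i _ => ?_
  have key : tstar ^ (2 - 2 * p i) * (t / tstar) ^ cmin ≤ t ^ (2 - 2 * p i) := by
    have h2 : (t / tstar) ^ cmin ≤ (t / tstar) ^ (2 - 2 * p i) :=
      Real.rpow_le_rpow_of_exponent_le hq (hc i)
    have h3 : tstar ^ (2 - 2 * p i) * (t / tstar) ^ (2 - 2 * p i) = t ^ (2 - 2 * p i) := by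
      rw [← Real.mul_rpow h0.le (div_nonneg ht.le h0.le)]
      congr 1
      field_simp
    calc tstar ^ (2 - 2 * p i) * (t / tstar) ^ cmin
        ≤ tstar ^ (2 - 2 * p i) * (t / tstar) ^ (2 - 2 * p i) :=
          mul_le_mul_of_nonneg_left h2 (rpow_pos_of_pos h0 _).le
      _ = t ^ (2 - 2 * p i) := h3
  calc tstar ^ (2 - 2 * p i) * ((lam i : ℝ)) ^ 2 * (t / tstar) ^ cmin
      = tstar ^ (2 - 2 * p i) * (t / tstar) ^ cmin * ((lam i : ℝ)) ^ 2 := by ring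
    _ ≤ t ^ (2 - 2 * p i) * ((lam i : ℝ)) ^ 2 :=
        mul_le_mul_of_nonneg_right key (sq_nonneg _)

end WHF

namespace WHF
variable {D : ℕ} {p : Fin D → ℝ} {lam : Fin D → ℤ}

lemma zeta_pos (hp : ∀ i, p i < 1) (hlam : lam ≠ 0) {t : ℝ} (ht : 0 < t) :
    0 < zeta p lam t := by
  rw [zeta_eq ht]
  exact div_pos (by have := T_pos (p := p) hlam ht; linarith) (U_pos hp hlam ht)

lemma Ehigh_identity (hp : ∀ i, p i < 1) (hlam : lam ≠ 0) (φ ψ : ℝ → ℝ)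
    (hsol : IsWaveSol p lam φ ψ (Set.Ioi 0)) {t : ℝ} (ht : 0 < t) :
    HasDerivAt (Ehigh p lam φ ψ)
      (2 * (U p lam t ^ 2 - T p lam t * V p lam t) / (t * U p lam t ^ 2) *
          (2 * zeta p lam t * ψ t ^ 2 / tau p lam t + ψ t * φ t / tau p lam t
            + 2 * zeta p lam t * tau p lam t * φ t ^ 2)
        - φ t ^ 2 / (2 * tau p lam t * zeta p lam t) / t) t := by
  obtain ⟨hφ, hψ⟩ := hsol t ht
  have hA : 0 < tau p lam t := tau_pos hlam ht
  have hU : 0 < U p lam t := U_pos hp hlam ht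
  have hT : 0 < T p lam t := T_pos hlam ht
  have hZ : 0 < zeta p lam t := zeta_pos hp hlam ht
  have hdτ := hasDerivAt_tau (p := p) hlam ht
  have hdζ := hasDerivAt_zeta hp hlam ht
  have h1 := ((hdζ.pow 2).mul (hψ.pow 2)).div hdτ hA.ne'
  have h2 := ((hdζ.mul hψ).mul hφ).div hdτ hA.ne'
  have h3 := (hφ.pow 2).div (hdτ.const_mul 2) (by positivity)
  have h4 := ((hdζ.pow 2).mul hdτ).mul (hφ.pow 2)
  have hE : HasDerivAt (Ehigh p lam φ ψ) _ t := ((h1.add h2).add h3).add h4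
  refine hE.congr_deriv ?_
  have hzu : zeta p lam t * U p lam t = 2 * tau p lam t ^ 2 := by
    rw [zeta_eq ht, tau_sq ht]; field_simp
  have hτd : U p lam t / (2 * t * tau p lam t) = tau p lam t / (t * zeta p lam t) := by
    rw [div_eq_div_iff (by positivity) (by positivity)]
    nlinarith [hzu]
  rw [hτd]
  generalize 2 * (U p lam t ^ 2 - T p lam t * V p lam t) / (t * U p lam t ^ 2) = zd
  simp only [Pi.pow_apply, Pi.mul_apply]
  push_cast
  field_simp
  ring

end WHF

namespace WHF

set_option maxHeartbeats 1000000 in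
lemma quad {m M A Z x y EE : ℝ} (hm : 0 < m) (h1 : m ≤ Z) (h2 : Z ≤ M) (hA : 0 < A)
    (hEE : EE = Z^2*x^2/A + Z*x*y/A + y^2/(2*A) + Z^2*A*y^2) :
    0 ≤ EE ∧ |2*Z*x^2/A + x*y/A + 2*Z*A*y^2| ≤ ((10*M+2)/m^2+3) * EE ∧
      y^2/(2*A*Z) ≤ 1/(2*m^3) * EE / A^2 := by
  have hZ : 0 < Z := lt_of_lt_of_le hm h1
  have hM : 0 < M := lt_of_lt_of_le hZ h2
  have hAE : A*EE = Z^2*x^2 + Z*x*y + y^2/2 + Z^2*(A*y)^2 := by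
    rw [hEE]; field_simp
  have hkey : Z^2*x^2/4 + y^2/6 + Z^2*(A*y)^2 ≤ A*EE := by
    nlinarith [sq_nonneg (3*Z*x+2*y)]
  have f1 : Z^2*x^2 ≤ 4*(A*EE) := by
    linarith [sq_nonneg y, sq_nonneg (Z*(A*y))]
  have f2 : y^2 ≤ 6*(A*EE) := by
    linarith [sq_nonneg (Z*x), sq_nonneg (Z*(A*y))]
  have f3 : Z^2*(A*y)^2 ≤ A*EE := by
    linarith [sq_nonneg (Z*x), sq_nonneg y]
  have hAEnn : 0 ≤ A*EE := le_trans (by positivity) hkey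
  have hEnn : 0 ≤ EE := by
    have h : EE = (A*EE)/A := by field_simp
    rw [h]; exact div_nonneg hAEnn hA.le
  have hm2x : m^2*x^2 ≤ Z^2*x^2 := by
    nlinarith [mul_nonneg (mul_nonneg (sub_nonneg.2 h1) (by linarith : (0:ℝ) ≤ Z+m)) (sq_nonneg x)]
  have hm2w : m^2*(A*y)^2 ≤ Z^2*(A*y)^2 := by
    nlinarith [mul_nonneg (mul_nonneg (sub_nonneg.2 h1) (by linarith : (0:ℝ) ≤ Z+m))
      (sq_nonneg (A*y))]
  refine ⟨hEnn, ?_, ?_⟩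
  · have s1 : m^2*x^2 ≤ 4*(A*EE) := hm2x.trans f1
    have s3 : m^2*(A*y)^2 ≤ A*EE := hm2w.trans f3
    have g1 : Z*(m^2*x^2) ≤ M*(4*(A*EE)) :=
      mul_le_mul h2 s1 (by positivity) hM.le
    have g3 : Z*(m^2*(A*y)^2) ≤ M*(A*EE) :=
      mul_le_mul h2 s3 (by positivity) hM.le
    have f2' : m^2*y^2 ≤ m^2*(6*(A*EE)) := mul_le_mul_of_nonneg_left f2 (sq_nonneg m)
    have gxy_up : m^2*(x*y) ≤ (m^2*x^2 + m^2*y^2)/2 := by nlinarith [sq_nonneg (m*(x-y))]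
    have gxy_lo : -(m^2*(x*y)) ≤ (m^2*x^2 + m^2*y^2)/2 := by nlinarith [sq_nonneg (m*(x+y))]
    have habs : |(2*Z*x^2 + x*y + 2*Z*(A*y)^2) * m^2| ≤ ((10*M+2)+3*m^2) * (A*EE) := by
      rw [abs_le]
      have e1 : (0:ℝ) ≤ Z*(m^2*x^2) := by positivity
      have e2 : (0:ℝ) ≤ Z*(m^2*(A*y)^2) := by positivity
      have e3 : (0:ℝ) ≤ M*(A*EE) := mul_nonneg hM.le hAEnn
      constructor
      · linarith
      · linarith
    have habs2 : |2*Z*x^2 + x*y + 2*Z*(A*y)^2| ≤ ((10*M+2)+3*m^2) * (A*EE) / m^2 := by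
      rw [le_div_iff₀ (by positivity : (0:ℝ) < m^2)]
      calc |2*Z*x^2 + x*y + 2*Z*(A*y)^2| * m^2
          = |(2*Z*x^2 + x*y + 2*Z*(A*y)^2) * m^2| := by
            rw [abs_mul, abs_of_pos (by positivity : (0:ℝ) < m^2)]
        _ ≤ _ := habs
    have hF : 2*Z*x^2/A + x*y/A + 2*Z*A*y^2 = (2*Z*x^2 + x*y + 2*Z*(A*y)^2)/A := by
      field_simp
    rw [hF, abs_div, abs_of_pos hA, div_le_iff₀ hA]
    calc |2*Z*x^2 + x*y + 2*Z*(A*y)^2| ≤ ((10*M+2)+3*m^2) * (A*EE) / m^2 := habs2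
      _ = ((10*M+2)/m^2+3) * EE * A := by field_simp
  · rw [div_le_div_iff₀ (by positivity) (by positivity)]
    have z3 : Z^3*(A*y)^2 ≤ Z*(A*EE) := by
      have := mul_le_mul_of_nonneg_left f3 hZ.le
      nlinarith [this]
    have m3 : m^3*(A*y)^2 ≤ Z^3*(A*y)^2 := by
      have hmz : m^3 ≤ Z^3 := pow_le_pow_left₀ hm.le h1 3
      nlinarith [mul_nonneg (sub_nonneg.2 hmz) (sq_nonneg (A*y))]
    have hgoal : y^2 * A^2 * (2*m^3) ≤ 2*(Z*(A*EE)) := by nlinarith [z3, m3]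
    calc y^2 * A^2 ≤ 2*(Z*(A*EE))/(2*m^3) := by
          rw [le_div_iff₀ (by positivity : (0:ℝ) < 2*m^3)]; exact hgoal
      _ = 1/(2*m^3)*EE*(2*A*Z) := by field_simp

lemma key1 (hp : ∀ i, p i < 1) (hlam : lam ≠ 0) {m M : ℝ} (hm : 0 < m)
    (φ ψ : ℝ → ℝ) (hsol : IsWaveSol p lam φ ψ (Set.Ioi 0)) {t : ℝ} (ht : 0 < t)
    (hzm : m ≤ zeta p lam t) (hzM : zeta p lam t ≤ M) :
    ∃ E' : ℝ, HasDerivAt (Ehigh p lam φ ψ) E' t ∧ 0 ≤ Ehigh p lam φ ψ t ∧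
      |t * E'| ≤ ((10*M+2)/m^2+3 + 1/(2*m^3)) *
        (t * |deriv (zeta p lam) t| + (tau p lam t ^ 2)⁻¹) * Ehigh p lam φ ψ t := by
  have hA : 0 < tau p lam t := tau_pos hlam ht
  have hZ : 0 < zeta p lam t := zeta_pos hp hlam ht
  have hid := Ehigh_identity hp hlam φ ψ hsol ht
  set zd := 2 * (U p lam t ^ 2 - T p lam t * V p lam t) / (t * U p lam t ^ 2) with hzd
  have hderiv : deriv (zeta p lam) t = zd := (hasDerivAt_zeta hp hlam ht).deriv
  set F := 2 * zeta p lam t * ψ t ^ 2 / tau p lam t + ψ t * φ t / tau p lam t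
      + 2 * zeta p lam t * tau p lam t * φ t ^ 2 with hF
  set r := φ t ^ 2 / (2 * tau p lam t * zeta p lam t) with hr
  refine ⟨zd * F - r / t, hid, ?_⟩
  obtain ⟨hEnn0, hFb0, hrb0⟩ := quad (x := ψ t) (y := φ t) hm hzm hzM hA rfl
  have hEnn : 0 ≤ Ehigh p lam φ ψ t := hEnn0
  have hFb : |F| ≤ ((10*M+2)/m^2+3) * Ehigh p lam φ ψ t := hFb0
  have hrb : r ≤ 1/(2*m^3) * Ehigh p lam φ ψ t / tau p lam t ^ 2 := hrb0
  clear hEnn0 hFb0 hrb0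
  refine ⟨hEnn, ?_⟩
  have hrnn : 0 ≤ r := by rw [hr]; positivity
  have ht1 : t * (zd * F - r / t) = t * zd * F - r := by
    field_simp
  rw [ht1, hderiv]
  have habs : |t * zd * F - r| ≤ t * |zd| * |F| + r := by
    calc |t * zd * F - r| ≤ |t * zd * F| + |r| := abs_sub _ _
      _ = t * |zd| * |F| + r := by
          rw [abs_of_nonneg hrnn, abs_mul, abs_mul, abs_of_pos ht]
  refine habs.trans ?_
  have hb1 : t * |zd| * |F| ≤ (t * |zd|) * (((10*M+2)/m^2+3) * Ehigh p lam φ ψ t) := by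
    exact mul_le_mul_of_nonneg_left hFb (by positivity)
  have hb2 : r ≤ 1/(2*m^3) * Ehigh p lam φ ψ t * (tau p lam t ^ 2)⁻¹ := by
    refine hrb.trans_eq ?_
    rw [div_eq_mul_inv]
  have ha : 0 ≤ t * |zd| := by positivity
  have hbnn : (0:ℝ) ≤ (tau p lam t ^ 2)⁻¹ := by positivity
  have hC1 : (0:ℝ) ≤ (10*M+2)/m^2+3 := by
    have hM : 0 < M := lt_of_lt_of_le (lt_of_lt_of_le hm hzm) hzM
    positivity
  have hC2 : (0:ℝ) ≤ 1/(2*m^3) := by positivity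
  nlinarith [mul_nonneg (mul_nonneg hC2 ha) hEnn, mul_nonneg (mul_nonneg hC1 hbnn) hEnn]

lemma zd_nonpos (hp : ∀ i, p i < 1) (hlam : lam ≠ 0) {s : ℝ} (hs : 0 < s) :
    2 * (U p lam s ^ 2 - T p lam s * V p lam s) / (s * U p lam s ^ 2) ≤ 0 := by
  apply div_nonpos_of_nonpos_of_nonneg
  · have := cauchy (p := p) (lam := lam) hp hs
    linarith
  · positivity

lemma tau_inv_bound (hlam : lam ≠ 0) {cmin : ℝ} (hcmin : ∀ i, cmin ≤ 2 - 2 * p i)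
    {tstar s : ℝ} (h0 : 0 < tstar) (hts : tau p lam tstar = 1) (hst : tstar ≤ s) :
    (tau p lam s ^ 2)⁻¹ ≤ tstar ^ cmin * s ^ (-cmin) := by
  have hs : 0 < s := lt_of_lt_of_le h0 hst
  have hT1 : T p lam tstar = 1 := by
    have := tau_sq (p := p) (lam := lam) h0
    rw [hts] at this; simpa using this.symm
  have hlow : (s / tstar) ^ cmin ≤ T p lam s := by
    have := T_lower (p := p) (lam := lam) hcmin h0 hst
    rw [hT1] at this; linarith
  have hpow : (0:ℝ) < (s / tstar) ^ cmin := rpow_pos_of_pos (div_pos hs h0) _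
  rw [tau_sq hs]
  calc (T p lam s)⁻¹ ≤ ((s / tstar) ^ cmin)⁻¹ := by
        exact inv_anti₀ hpow hlow
    _ = tstar ^ cmin * s ^ (-cmin) := by
        rw [Real.div_rpow hs.le h0.le, Real.rpow_neg hs.le, inv_div, div_eq_mul_inv]
        try ring

lemma hasDerivAt_w (hp : ∀ i, p i < 1) (hlam : lam ≠ 0) {cmin : ℝ} (hc0 : 0 < cmin)
    (Cc tstar : ℝ) {s : ℝ} (hs : 0 < s) :
    HasDerivAt (fun u => Cc * (-(zeta p lam u) - tstar ^ cmin * u ^ (-cmin) / cmin))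
      (Cc * (-(2 * (U p lam s ^ 2 - T p lam s * V p lam s) / (s * U p lam s ^ 2))
        + tstar ^ cmin * s ^ (-cmin - 1))) s := by
  have hrp := Real.hasDerivAt_rpow_const (x := s) (p := -cmin) (Or.inl hs.ne')
  have h2 := (hrp.const_mul (tstar ^ cmin)).div_const cmin
  have h3 := ((hasDerivAt_zeta hp hlam hs).neg.sub h2).const_mul Cc
  refine h3.congr_deriv ?_
  field_simp
  ring

lemma key2aux (hp : ∀ i, p i < 1) (hlam : lam ≠ 0) {cmin cmax : ℝ} (hc0 : 0 < cmin)
    (hcmin : ∀ i, cmin ≤ 2 - 2 * p i) (hcm0 : 0 < cmax) (hcmax : ∀ i, 2 - 2 * p i ≤ cmax)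
    {tstar : ℝ} (h0 : 0 < tstar) (hts : tau p lam tstar = 1)
    (φ ψ : ℝ → ℝ) (hsol : IsWaveSol p lam φ ψ (Set.Ioi 0))
    {Cc : ℝ} (hCc : (10*(2/cmin)+2)/(2/cmax)^2+3 + 1/(2*(2/cmax)^3) ≤ Cc)
    {s : ℝ} (hst : tstar ≤ s) :
    ∃ d₁ d₂ : ℝ,
      HasDerivAt (fun u => Ehigh p lam φ ψ u *
        Real.exp (-(Cc * (-(zeta p lam u) - tstar ^ cmin * u ^ (-cmin) / cmin)))) d₁ s ∧
      d₁ ≤ 0 ∧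
      HasDerivAt (fun u => Ehigh p lam φ ψ u *
        Real.exp (Cc * (-(zeta p lam u) - tstar ^ cmin * u ^ (-cmin) / cmin))) d₂ s ∧
      0 ≤ d₂ := by
  have hs : 0 < s := lt_of_lt_of_le h0 hst
  have hm : (0:ℝ) < 2/cmax := by positivity
  have hzm : 2/cmax ≤ zeta p lam s := zeta_ge hp hlam hcm0 hcmax hs
  have hzM : zeta p lam s ≤ 2/cmin := zeta_le hp hlam hc0 hcmin hs
  obtain ⟨Ed, hEd, hEnn, hb⟩ := key1 hp hlam hm φ ψ hsol hs hzm hzM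
  have hCcnn : 0 ≤ Cc := le_trans (by positivity) hCc
  set f := Ehigh p lam φ ψ s with hf
  set zd := 2 * (U p lam s ^ 2 - T p lam s * V p lam s) / (s * U p lam s ^ 2) with hzdd
  have hzds : deriv (zeta p lam) s = zd := (hasDerivAt_zeta hp hlam hs).deriv
  have hzd0 : zd ≤ 0 := zd_nonpos hp hlam hs
  set wd := Cc * (-zd + tstar ^ cmin * s ^ (-cmin - 1)) with hwd
  have hw := hasDerivAt_w (lam := lam) hp hlam hc0 Cc tstar hs
  -- |Ed| ≤ wd * f
  have htb : (tau p lam s ^ 2)⁻¹ ≤ tstar ^ cmin * s ^ (-cmin) :=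
    tau_inv_bound hlam hcmin h0 hts hst
  have hsc : s * (tstar ^ cmin * s ^ (-cmin - 1)) = tstar ^ cmin * s ^ (-cmin) := by
    rw [Real.rpow_sub_one hs.ne']
    field_simp
    try ring
  have hEb : |Ed| ≤ wd * f := by
    have h1 : |s * Ed| ≤ Cc * (s * |deriv (zeta p lam) s| + (tau p lam s ^ 2)⁻¹) * f := by
      refine hb.trans ?_
      have : (0:ℝ) ≤ (s * |deriv (zeta p lam) s| + (tau p lam s ^ 2)⁻¹) * f := by
        have : (0:ℝ) ≤ s * |deriv (zeta p lam) s| + (tau p lam s ^ 2)⁻¹ := by positivity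
        exact mul_nonneg this hEnn
      nlinarith [hCc, this]
    have h2 : Cc * (s * |deriv (zeta p lam) s| + (tau p lam s ^ 2)⁻¹) * f ≤ s * (wd * f) := by
      rw [hzds, abs_of_nonpos hzd0, hwd]
      have hexp : s * (Cc * (-zd + tstar ^ cmin * s ^ (-cmin - 1)) * f)
          = Cc * (s * -zd + s * (tstar ^ cmin * s ^ (-cmin - 1))) * f := by ring
      rw [hexp, hsc]
      have : s * |deriv (zeta p lam) s| = s * -zd := by rw [hzds, abs_of_nonpos hzd0]
      refine mul_le_mul_of_nonneg_right (mul_le_mul_of_nonneg_left ?_ hCcnn) hEnn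
      linarith
    have h3 : |s * Ed| ≤ s * (wd * f) := h1.trans h2
    have h4 : s * |Ed| = |s * Ed| := by rw [abs_mul, abs_of_pos hs]
    exact le_of_mul_le_mul_left (by linarith : s * |Ed| ≤ s * (wd * f)) hs
  have hwdf : 0 ≤ wd * f := le_trans (abs_nonneg _) hEb
  -- minus direction
  refine ⟨_, _, (hEd.mul ((hw.neg).exp)), ?_, (hEd.mul hw.exp), ?_⟩
  · have hkey : Ed - f * wd ≤ 0 := by
      have := le_of_abs_le hEb; linarith
    have hval : Ed * Real.exp (-(Cc * (-(zeta p lam s) - tstar ^ cmin * s ^ (-cmin) / cmin)))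
        + f * (Real.exp (-(Cc * (-(zeta p lam s) - tstar ^ cmin * s ^ (-cmin) / cmin))) * -wd)
        = (Ed - f * wd) * Real.exp (-(Cc * (-(zeta p lam s) - tstar ^ cmin * s ^ (-cmin) / cmin))) := by
      ring
    show Ed * Real.exp (-(Cc * (-(zeta p lam s) - tstar ^ cmin * s ^ (-cmin) / cmin)))
        + f * (Real.exp (-(Cc * (-(zeta p lam s) - tstar ^ cmin * s ^ (-cmin) / cmin))) * -wd) ≤ 0
    rw [hval]
    exact mul_nonpos_of_nonpos_of_nonneg hkey (Real.exp_pos _).le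
  · have hkey : 0 ≤ Ed + f * wd := by
      have := neg_abs_le Ed; linarith
    have hval : Ed * Real.exp (Cc * (-(zeta p lam s) - tstar ^ cmin * s ^ (-cmin) / cmin))
        + f * (Real.exp (Cc * (-(zeta p lam s) - tstar ^ cmin * s ^ (-cmin) / cmin)) * wd)
        = (Ed + f * wd) * Real.exp (Cc * (-(zeta p lam s) - tstar ^ cmin * s ^ (-cmin) / cmin)) := by
      ring
    show 0 ≤ Ed * Real.exp (Cc * (-(zeta p lam s) - tstar ^ cmin * s ^ (-cmin) / cmin))
        + f * (Real.exp (Cc * (-(zeta p lam s) - tstar ^ cmin * s ^ (-cmin) / cmin)) * wd)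
    rw [hval]
    exact mul_nonneg hkey (Real.exp_pos _).le

lemma Ehigh_nonneg (hp : ∀ i, p i < 1) (hlam : lam ≠ 0) (φ ψ : ℝ → ℝ) {s : ℝ} (hs : 0 < s) :
    0 ≤ Ehigh p lam φ ψ s := by
  have hZ : 0 < zeta p lam s := zeta_pos hp hlam hs
  exact (quad (x := ψ s) (y := φ s) hZ (le_refl _) (le_refl _) (tau_pos hlam hs) rfl).1

lemma key2 (hp : ∀ i, p i < 1) (hlam : lam ≠ 0) {cmin cmax : ℝ} (hc0 : 0 < cmin)
    (hcmin : ∀ i, cmin ≤ 2 - 2 * p i) (hcm0 : 0 < cmax) (hcmax : ∀ i, 2 - 2 * p i ≤ cmax)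
    {tstar : ℝ} (h0 : 0 < tstar) (hst1 : tstar ≤ 1) (hts : tau p lam tstar = 1)
    (φ ψ : ℝ → ℝ) (hsol : IsWaveSol p lam φ ψ (Set.Ioi 0))
    {Cc : ℝ} (hCc : (10*(2/cmin)+2)/(2/cmax)^2+3 + 1/(2*(2/cmax)^3) ≤ Cc)
    {t : ℝ} (htt : tstar ≤ t) (ht1 : t ≤ 1) :
    Ehigh p lam φ ψ 1 ≤ Real.exp (Cc*(2/cmin - 2/cmax) + Cc/cmin) * Ehigh p lam φ ψ t ∧
    Ehigh p lam φ ψ t ≤ Real.exp (Cc*(2/cmin - 2/cmax) + Cc/cmin) * Ehigh p lam φ ψ 1 := by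
  have ht : 0 < t := lt_of_lt_of_le h0 htt
  have hCcnn : 0 ≤ Cc := le_trans (by positivity) hCc
  have hg : ∀ s ∈ Set.Icc tstar (1:ℝ), ∃ d₁ d₂ : ℝ,
      HasDerivAt (fun u => Ehigh p lam φ ψ u *
        Real.exp (-(Cc * (-(zeta p lam u) - tstar ^ cmin * u ^ (-cmin) / cmin)))) d₁ s ∧
      d₁ ≤ 0 ∧
      HasDerivAt (fun u => Ehigh p lam φ ψ u *
        Real.exp (Cc * (-(zeta p lam u) - tstar ^ cmin * u ^ (-cmin) / cmin))) d₂ s ∧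
      0 ≤ d₂ :=
    fun s hs => key2aux hp hlam hc0 hcmin hcm0 hcmax h0 hts φ ψ hsol hCc hs.1
  have hanti : AntitoneOn (fun u => Ehigh p lam φ ψ u *
      Real.exp (-(Cc * (-(zeta p lam u) - tstar ^ cmin * u ^ (-cmin) / cmin))))
      (Set.Icc tstar 1) := by
    refine antitoneOn_of_deriv_nonpos (convex_Icc _ _) ?_ ?_ ?_
    · intro s hs
      exact ((hg s hs).choose_spec.choose_spec.1).continuousAt.continuousWithinAt
    · intro s hs
      exact ((hg s (interior_subset hs)).choose_spec.choose_spec.1).differentiableAt.differentiableWithinAt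
    · intro s hs
      obtain ⟨d1, d2, hd1, hd1n, _, _⟩ := hg s (interior_subset hs)
      rw [hd1.deriv]; exact hd1n
  have hmono : MonotoneOn (fun u => Ehigh p lam φ ψ u *
      Real.exp (Cc * (-(zeta p lam u) - tstar ^ cmin * u ^ (-cmin) / cmin)))
      (Set.Icc tstar 1) := by
    refine monotoneOn_of_deriv_nonneg (convex_Icc _ _) ?_ ?_ ?_
    · intro s hs
      exact ((hg s hs).choose_spec.choose_spec.2.2.1).continuousAt.continuousWithinAt
    · intro s hs
      exact ((hg s (interior_subset hs)).choose_spec.choose_spec.2.2.1).differentiableAt.differentiableWithinAt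
    · intro s hs
      obtain ⟨d1, d2, _, _, hd2, hd2n⟩ := hg s (interior_subset hs)
      rw [hd2.deriv]; exact hd2n
  have memt : t ∈ Set.Icc tstar (1:ℝ) := ⟨htt, ht1⟩
  have mem1 : (1:ℝ) ∈ Set.Icc tstar (1:ℝ) := ⟨hst1, le_refl _⟩
  have hA := hanti memt mem1 ht1
  have hB := hmono memt mem1 ht1
  set w : ℝ → ℝ := fun u => Cc * (-(zeta p lam u) - tstar ^ cmin * u ^ (-cmin) / cmin) with hw
  have ftnn : 0 ≤ Ehigh p lam φ ψ t := Ehigh_nonneg hp hlam φ ψ ht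
  have f1nn : 0 ≤ Ehigh p lam φ ψ 1 := Ehigh_nonneg hp hlam φ ψ one_pos
  -- bound on w 1 - w t
  have hpow1 : tstar ^ cmin * t ^ (-cmin) ≤ 1 := by
    have h1 : tstar ^ cmin ≤ t ^ cmin := Real.rpow_le_rpow h0.le htt hc0.le
    have h2 : t ^ (-cmin) ≤ tstar ^ (-cmin) := by
      rw [Real.rpow_neg h0.le, Real.rpow_neg ht.le]
      exact inv_anti₀ (rpow_pos_of_pos h0 _) h1
    calc tstar ^ cmin * t ^ (-cmin) ≤ tstar ^ cmin * tstar ^ (-cmin) :=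
          mul_le_mul_of_nonneg_left h2 (rpow_pos_of_pos h0 _).le
      _ = 1 := by
          rw [Real.rpow_neg h0.le, mul_inv_cancel₀ (rpow_pos_of_pos h0 _).ne']
  have hΔ : w 1 - w t ≤ Cc*(2/cmin - 2/cmax) + Cc/cmin := by
    have hz1 : 2/cmax ≤ zeta p lam 1 := zeta_ge hp hlam hcm0 hcmax one_pos
    have hzt : zeta p lam t ≤ 2/cmin := zeta_le hp hlam hc0 hcmin ht
    have hone : (1:ℝ) ^ (-cmin) = 1 := Real.one_rpow _
    have hnn : 0 ≤ tstar ^ cmin * (1:ℝ) ^ (-cmin) := by positivity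
    have hq : tstar ^ cmin * t ^ (-cmin) / cmin - tstar ^ cmin * (1:ℝ) ^ (-cmin) / cmin
        ≤ 1 / cmin := by
      rw [div_sub_div_same, div_le_div_iff₀ hc0 hc0]
      nlinarith [hpow1, hnn, hc0]
    have hzz : zeta p lam t - zeta p lam 1 ≤ 2/cmin - 2/cmax := by linarith
    have hexp : w 1 - w t = Cc * (zeta p lam t - zeta p lam 1)
        + Cc * (tstar ^ cmin * t ^ (-cmin) / cmin - tstar ^ cmin * (1:ℝ) ^ (-cmin) / cmin) := by
      rw [hw]; ring
    rw [hexp]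
    have b1 : Cc * (zeta p lam t - zeta p lam 1) ≤ Cc * (2/cmin - 2/cmax) :=
      mul_le_mul_of_nonneg_left hzz hCcnn
    have b2 : Cc * (tstar ^ cmin * t ^ (-cmin) / cmin - tstar ^ cmin * (1:ℝ) ^ (-cmin) / cmin)
        ≤ Cc * (1/cmin) := mul_le_mul_of_nonneg_left hq hCcnn
    have : Cc * (1/cmin) = Cc/cmin := by ring
    linarith
  have hexpΔ : Real.exp (w 1 - w t) ≤ Real.exp (Cc*(2/cmin - 2/cmax) + Cc/cmin) :=
    Real.exp_le_exp.2 hΔ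
  constructor
  · have step : Ehigh p lam φ ψ 1 ≤ Ehigh p lam φ ψ t * Real.exp (w 1 - w t) := by
      have e1 : Ehigh p lam φ ψ 1
          = (Ehigh p lam φ ψ 1 * Real.exp (-(w 1))) * Real.exp (w 1) := by
        rw [mul_assoc, ← Real.exp_add]; simp
      have e2 : (Ehigh p lam φ ψ t * Real.exp (-(w t))) * Real.exp (w 1)
          = Ehigh p lam φ ψ t * Real.exp (w 1 - w t) := by
        rw [mul_assoc, ← Real.exp_add]; ring_nf
      rw [e1, ← e2]
      exact mul_le_mul_of_nonneg_right hA (Real.exp_pos _).le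
    calc Ehigh p lam φ ψ 1 ≤ Ehigh p lam φ ψ t * Real.exp (w 1 - w t) := step
      _ ≤ Ehigh p lam φ ψ t * Real.exp (Cc*(2/cmin - 2/cmax) + Cc/cmin) :=
          mul_le_mul_of_nonneg_left hexpΔ ftnn
      _ = Real.exp (Cc*(2/cmin - 2/cmax) + Cc/cmin) * Ehigh p lam φ ψ t := by ring
  · have step : Ehigh p lam φ ψ t ≤ Ehigh p lam φ ψ 1 * Real.exp (w 1 - w t) := by
      have e1 : Ehigh p lam φ ψ t
          = (Ehigh p lam φ ψ t * Real.exp (w t)) * Real.exp (-(w t)) := by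
        rw [mul_assoc, ← Real.exp_add]; simp
      have e2 : (Ehigh p lam φ ψ 1 * Real.exp (w 1)) * Real.exp (-(w t))
          = Ehigh p lam φ ψ 1 * Real.exp (w 1 - w t) := by
        rw [mul_assoc, ← Real.exp_add]; ring_nf
      rw [e1]
      calc (Ehigh p lam φ ψ t * Real.exp (w t)) * Real.exp (-(w t))
          ≤ (Ehigh p lam φ ψ 1 * Real.exp (w 1)) * Real.exp (-(w t)) :=
            mul_le_mul_of_nonneg_right hB (Real.exp_pos _).le
        _ = Ehigh p lam φ ψ 1 * Real.exp (w 1 - w t) := e2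
    calc Ehigh p lam φ ψ t ≤ Ehigh p lam φ ψ 1 * Real.exp (w 1 - w t) := step
      _ ≤ Ehigh p lam φ ψ 1 * Real.exp (Cc*(2/cmin - 2/cmax) + Cc/cmin) :=
          mul_le_mul_of_nonneg_left hexpΔ f1nn
      _ = Real.exp (Cc*(2/cmin - 2/cmax) + Cc/cmin) * Ehigh p lam φ ψ 1 := by ring

end WHF


/-- Proposition `prop:wave_high_freq`: the high-frequency energy estimate for the wave equation. -/
theorem wave_high_freq_energy_estimate (D : ℕ) (hD : 2 ≤ D) (p : Fin D → ℝ)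
    (hp : ∀ i, p i < 1) :
    (∃ C : ℝ, 0 < C ∧
      ∀ (lam : Fin D → ℤ), lam ≠ 0 →
      ∀ tstar : ℝ, 0 < tstar → tstar ≤ 1 → tau p lam tstar = 1 →
      ∀ φ ψ : ℝ → ℝ, IsWaveSol p lam φ ψ (Set.Ioi 0) →
      ∀ t : ℝ, tstar ≤ t →
        ∃ E' : ℝ, HasDerivAt (Ehigh p lam φ ψ) E' t ∧
          |t * E'| ≤ C * (t * |deriv (zeta p lam) t| + (tau p lam t ^ 2)⁻¹)
              * Ehigh p lam φ ψ t) ∧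
    (∃ Chigh : ℝ, 0 < Chigh ∧
      ∀ (lam : Fin D → ℤ), lam ≠ 0 →
      ∀ tstar : ℝ, 0 < tstar → tstar ≤ 1 → tau p lam tstar = 1 →
      ∀ φ ψ : ℝ → ℝ, IsWaveSol p lam φ ψ (Set.Ioi 0) →
      ∀ t : ℝ, tstar ≤ t → t ≤ 1 →
        Chigh⁻¹ * Ehigh p lam φ ψ t ≤ Ehigh p lam φ ψ 1 ∧
        Ehigh p lam φ ψ 1 ≤ Chigh * Ehigh p lam φ ψ t) := by
  haveI : Nonempty (Fin D) := ⟨⟨0, by omega⟩⟩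
  have hne : (Finset.univ : Finset (Fin D)).Nonempty := Finset.univ_nonempty
  set c1 := Finset.univ.inf' hne (fun i => 2 - 2 * p i) with hc1def
  set c2 := Finset.univ.sup' hne (fun i => 2 - 2 * p i) with hc2def
  have hc10 : 0 < c1 := by
    rw [hc1def, Finset.lt_inf'_iff]
    intro i _
    have := hp i; linarith
  have hc1 : ∀ i, c1 ≤ 2 - 2 * p i := fun i => Finset.inf'_le _ (Finset.mem_univ i)
  have hc2 : ∀ i, 2 - 2 * p i ≤ c2 := fun i => by
    rw [hc2def]; exact Finset.le_sup' (fun i => 2 - 2 * p i) (Finset.mem_univ i)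
  have hc20 : 0 < c2 := by
    obtain ⟨i0⟩ := (inferInstance : Nonempty (Fin D))
    exact lt_of_lt_of_le hc10 ((hc1 i0).trans (hc2 i0))
  have h1 : (0:ℝ) < 2/c1 := div_pos two_pos hc10
  have h2 : (0:ℝ) < 2/c2 := div_pos two_pos hc20
  have hCpos : 0 < (10*(2/c1)+2)/(2/c2)^2+3 + 1/(2*(2/c2)^3) := by
    have e1 : (0:ℝ) < (10*(2/c1)+2)/(2/c2)^2 := div_pos (by linarith) (pow_pos h2 2)
    have e2 : (0:ℝ) < 1/(2*(2/c2)^3) := div_pos one_pos (by have := pow_pos h2 3; linarith)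
    linarith
  constructor
  · refine ⟨(10*(2/c1)+2)/(2/c2)^2+3 + 1/(2*(2/c2)^3), hCpos, ?_⟩
    intro lam hlam tstar h0 hst1 hts φ ψ hsol t htt
    have ht : 0 < t := lt_of_lt_of_le h0 htt
    obtain ⟨E', hE, hEnn, hb⟩ := WHF.key1 hp hlam h2 φ ψ hsol ht
      (WHF.zeta_ge hp hlam hc20 hc2 ht) (WHF.zeta_le hp hlam hc10 hc1 ht)
    exact ⟨E', hE, hb⟩
  · set Cc := (10*(2/c1)+2)/(2/c2)^2+3 + 1/(2*(2/c2)^3) with hCcdef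
    refine ⟨Real.exp (Cc*(2/c1 - 2/c2) + Cc/c1), Real.exp_pos _, ?_⟩
    intro lam hlam tstar h0 hst1 hts φ ψ hsol t htt ht1
    obtain ⟨hA, hB⟩ := WHF.key2 hp hlam hc10 hc1 hc20 hc2 h0 hst1 hts φ ψ hsol
      (le_refl Cc) htt ht1
    constructor
    · rw [inv_mul_le_iff₀ (Real.exp_pos _)]
      exact hB
    · exact hA
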